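/- Let q = 2^r with r ≥ 1 (an even prime power) and set v = 1 + q + q² + q³. Then there exists a v×v (0,1)-matrix that is the adjacency matrix of a strongly regular graph with parameters SRG(v, q³, q³ − q², q³ − q²). -/

import Mathlib

open Matrix Finset

/-- The all-ones matrix. -/
def allOnes (ι : Type*) : Matrix ι ι ℤ := Matrix.of fun _ _ => 1

/-- `A` is the adjacency matrix of a strongly regular graph with parameters `(v, k, l, mu)`. -/
def IsSRGAdj {ι : Type*} [Fintype ι] [DecidableEq ι]
    (A : Matrix ι ι ℤ) (k l mu : ℤ) : Prop :=
  A.IsSymm ∧ (∀ i, A i i = 0) ∧ (∀ i j, A i j = 0 ∨ A i j = 1) ∧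
    A * A = k • (1 : Matrix ι ι ℤ) + l • A + mu • (allOnes ι - 1 - A)

namespace SRG4

attribute [local instance] Classical.propDecidable

/-- Transport of IsSRGAdj along an index equivalence. -/
lemma isSRGAdj_reindex {ι κ : Type*} [Fintype ι] [DecidableEq ι] [Fintype κ] [DecidableEq κ]
    (e : ι ≃ κ) {A : Matrix ι ι ℤ} {k l mu : ℤ} (h : IsSRGAdj A k l mu) :
    IsSRGAdj (Matrix.reindex e e A) k l mu := by
  obtain ⟨h1, h2, h3, h4⟩ := h
  refine ⟨?_, ?_, ?_, ?_⟩
  · ext i j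
    simp only [Matrix.transpose_apply, Matrix.reindex_apply, Matrix.submatrix_apply]
    exact h1.apply _ _
  · intro i; simpa using h2 (e.symm i)
  · intro i j; exact h3 _ _
  · have key : (Matrix.reindex e e A) * (Matrix.reindex e e A) = Matrix.reindex e e (A * A) := by
      simp only [Matrix.reindex_apply]
      exact Matrix.submatrix_mul_equiv A A e.symm e.symm e.symm
    have hall : (allOnes ι).submatrix ⇑e.symm ⇑e.symm = allOnes κ := rfl
    rw [key, h4]
    ext i j
    simp only [Matrix.reindex_apply, Matrix.submatrix_apply, Matrix.add_apply,
      Matrix.smul_apply, Matrix.sub_apply, Matrix.one_apply, allOnes, Matrix.of_apply,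
      e.symm.injective.eq_iff]

section Field

variable {r : ℕ}

local instance : Fact (Nat.Prime 2) := ⟨Nat.prime_two⟩

noncomputable instance : Fintype (GaloisField 2 r) := Fintype.ofFinite _

local notation "F" => GaloisField 2 r
local notation "Vec" => (Fin 4 → GaloisField 2 r)

/-- the symplectic/symmetric bilinear form in characteristic 2 -/
noncomputable def ω (x y : Vec) : F := x 0 * y 1 + x 1 * y 0 + x 2 * y 3 + x 3 * y 2

lemma ω_symm (x y : Vec) : ω x y = ω y x := by unfold ω; ring

lemma ω_self (x : Vec) : ω x x = 0 := by
  have h2 : (2 : F) = 0 := by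
    have := CharP.cast_eq_zero F 2; simpa using this
  unfold ω
  have : x 0 * x 1 + x 1 * x 0 + x 2 * x 3 + x 3 * x 2
      = 2 * (x 0 * x 1 + x 2 * x 3) := by ring
  rw [this, h2, zero_mul]

/-- linearity in the second argument -/
noncomputable def fω (x : Vec) : (Fin 4 → GaloisField 2 r) →ₗ[F] F where
  toFun y := ω x y
  map_add' y z := by unfold ω; simp [Pi.add_apply]; ring
  map_smul' c y := by unfold ω; simp [Pi.smul_apply, smul_eq_mul]; ring

lemma ω_sub_smul (x y v : Vec) (c : F) : ω (x - c • y) v = ω x v - c * ω y v := by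
  unfold ω; simp [Pi.sub_apply, Pi.smul_apply, smul_eq_mul]; ring

lemma ω_nondeg {x : Vec} (h : ∀ y, ω x y = 0) : x = 0 := by
  funext i
  fin_cases i
  · simpa [ω] using h ![0,1,0,0]
  · simpa [ω] using h ![1,0,0,0]
  · simpa [ω] using h ![0,0,0,1]
  · simpa [ω] using h ![0,0,1,0]

lemma ω_exists_ne {x : Vec} (hx : x ≠ 0) : ∃ z, ω x z ≠ 0 := by
  by_contra h
  push_neg at h
  exact hx (ω_nondeg h)

lemma ω_zero_right (x : Vec) : ω x 0 = 0 := by simp [ω]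

/-- normalized representatives of projective points of `Vec = K⁴` -/
abbrev P (r : ℕ) : Type :=
  (GaloisField 2 r × GaloisField 2 r × GaloisField 2 r) ⊕
    ((GaloisField 2 r × GaloisField 2 r) ⊕ (GaloisField 2 r ⊕ Unit))

noncomputable def φ : P r → (Fin 4 → GaloisField 2 r)
  | .inl (a, b, c) => ![1, a, b, c]
  | .inr (.inl (a, b)) => ![0, 1, a, b]
  | .inr (.inr (.inl a)) => ![0, 0, 1, a]
  | .inr (.inr (.inr _)) => ![0, 0, 0, 1]

lemma φ_ne_zero (p : P r) : φ p ≠ 0 := by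
  rcases p with ⟨a, b, c⟩ | ⟨a, b⟩ | a | ⟨⟩ <;>
    · intro h
      simp only [φ] at h
      first
      | exact one_ne_zero (congrFun h 0)
      | exact one_ne_zero (congrFun h 1)
      | exact one_ne_zero (congrFun h 2)
      | exact one_ne_zero (congrFun h 3)

lemma exists_decomp (z : Vec) (hz : z ≠ 0) :
    ∃ (c : F) (p : P r), c ≠ 0 ∧ z = c • φ p := by
  by_cases h0 : z 0 ≠ 0
  · refine ⟨z 0, .inl ((z 0)⁻¹ * z 1, (z 0)⁻¹ * z 2, (z 0)⁻¹ * z 3), h0, ?_⟩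
    funext i; fin_cases i <;> simp [φ] <;> field_simp
  push_neg at h0
  by_cases h1 : z 1 ≠ 0
  · refine ⟨z 1, .inr (.inl ((z 1)⁻¹ * z 2, (z 1)⁻¹ * z 3)), h1, ?_⟩
    funext i; fin_cases i <;> simp [φ, h0] <;> field_simp
  push_neg at h1
  by_cases h2 : z 2 ≠ 0
  · refine ⟨z 2, .inr (.inr (.inl ((z 2)⁻¹ * z 3))), h2, ?_⟩
    funext i; fin_cases i <;> simp [φ, h0, h1] <;> field_simp
  push_neg at h2
  by_cases h3 : z 3 ≠ 0
  · refine ⟨z 3, .inr (.inr (.inr ())), h3, ?_⟩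
    funext i; fin_cases i <;> simp [φ, h0, h1, h2]
  push_neg at h3
  exfalso; apply hz; funext i; fin_cases i <;> assumption

lemma unique_decomp {c c' : F} {p p' : P r} (hc : c ≠ 0) (hc' : c' ≠ 0)
    (h : c • φ p = c' • φ p') : p = p' ∧ c = c' := by
  have h0 := congrFun h 0
  have h1 := congrFun h 1
  have h2 := congrFun h 2
  have h3 := congrFun h 3
  clear h
  rcases p with ⟨a, b, c₁⟩ | ⟨a, b⟩ | a | ⟨⟩ <;>
    rcases p' with ⟨a', b', c₁'⟩ | ⟨a', b'⟩ | a' | ⟨⟩ <;>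
    simp (config := { failIfUnchanged := false }) only [φ, Pi.smul_apply, smul_eq_mul,
      Matrix.cons_val_zero, Matrix.cons_val_one, Matrix.head_cons, Matrix.cons_val_two,
      Matrix.tail_cons, Matrix.cons_val_three, mul_one, mul_zero] at h0 h1 h2 h3 <;>
    first
    | exact absurd h0 hc
    | exact absurd h1 hc
    | exact absurd h2 hc
    | exact absurd h3 hc
    | exact absurd h0.symm hc'
    | exact absurd h1.symm hc'
    | exact absurd h2.symm hc'
    | exact absurd h3.symm hc'
    | (obtain rfl := h0
       exact ⟨by rw [mul_left_cancel₀ hc h1, mul_left_cancel₀ hc h2, mul_left_cancel₀ hc h3], rfl⟩)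
    | (obtain rfl := h1
       exact ⟨by rw [mul_left_cancel₀ hc h2, mul_left_cancel₀ hc h3], rfl⟩)
    | (obtain rfl := h2
       exact ⟨by rw [mul_left_cancel₀ hc h3], rfl⟩)
    | (obtain rfl := h3
       exact ⟨rfl, rfl⟩)

/-- non-proportional representatives give distinct points -/
lemma nonprop_of_ne {p p' : P r} (hpp : p ≠ p') :
    ∀ c : F, φ p ≠ c • φ p' := by
  intro c hEq
  have hc : c ≠ 0 := by
    rintro rfl
    rw [zero_smul] at hEq
    exact φ_ne_zero p hEq
  have := unique_decomp (one_ne_zero) hc (by rw [one_smul]; exact hEq)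
  exact hpp this.1

/-- cardinality of the kernel of ω x ·  -/
lemma card_ker_filter {x : Vec} (hx : x ≠ 0) :
    (univ.filter fun z : Vec => ω x z = 0).card = Fintype.card F ^ 3 := by
  classical
  have hrange : LinearMap.range (fω x) = ⊤ := by
    rw [LinearMap.range_eq_top]
    obtain ⟨z₀, hz₀⟩ := ω_exists_ne hx
    intro c
    refine ⟨(c * (ω x z₀)⁻¹) • z₀, ?_⟩
    show ω x ((c * (ω x z₀)⁻¹) • z₀) = c
    rw [show ω x ((c * (ω x z₀)⁻¹) • z₀) = (c * (ω x z₀)⁻¹) * ω x z₀ from (fω x).map_smul _ z₀]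
    field_simp
  have hV4 : Module.finrank F (Fin 4 → GaloisField 2 r) = 4 := by
    simp [Module.finrank_fin_fun]
  have hrank := LinearMap.finrank_range_add_finrank_ker (fω x)
  rw [hrange, finrank_top, hV4, Module.finrank_self] at hrank
  have hker : Module.finrank F (LinearMap.ker (fω x)) = 3 := by omega
  have hcard : Fintype.card (LinearMap.ker (fω x)) = Fintype.card F ^ 3 := by
    have := Module.card_eq_pow_finrank (K := F) (V := ↥(LinearMap.ker (fω x)))
    rw [this, hker]
  rw [← Fintype.card_subtype]
  rw [← hcard]
  exact Fintype.card_congr (Equiv.subtypeEquivRight fun z => by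
    simp [LinearMap.mem_ker, fω])

lemma ω_smul_right (x z : Vec) (c : F) : ω x (c • z) = c * ω x z := by
  unfold ω; simp [Pi.smul_apply, smul_eq_mul]; ring

lemma ω_sub_smul_right (y v z₀ : Vec) (d : F) :
    ω y (v - d • z₀) = ω y v - d * ω y z₀ := by
  unfold ω; simp [Pi.sub_apply, Pi.smul_apply, smul_eq_mul]; ring

lemma finrank_ker {x : Vec} (hx : x ≠ 0) :
    Module.finrank F (LinearMap.ker (fω x)) = 3 := by
  have hrange : LinearMap.range (fω x) = ⊤ := by
    rw [LinearMap.range_eq_top]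
    obtain ⟨z₀, hz₀⟩ := ω_exists_ne hx
    intro c
    refine ⟨(c * (ω x z₀)⁻¹) • z₀, ?_⟩
    show ω x ((c * (ω x z₀)⁻¹) • z₀) = c
    rw [ω_smul_right]
    field_simp
  have hV4 : Module.finrank F (Fin 4 → GaloisField 2 r) = 4 := by
    simp [Module.finrank_fin_fun]
  have hrank := LinearMap.finrank_range_add_finrank_ker (fω x)
  rw [hrange, finrank_top, hV4, Module.finrank_self] at hrank
  omega

lemma ker_ne_ker {x y : Vec} (hx : x ≠ 0) (hy : y ≠ 0) (hxy : ∀ c : F, x ≠ c • y) :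
    LinearMap.ker (fω x) ≠ LinearMap.ker (fω y) := by
  intro heq
  obtain ⟨z₀, hz₀⟩ := ω_exists_ne hy
  set c : F := ω x z₀ * (ω y z₀)⁻¹ with hc
  have key : ∀ v, ω x v = c * ω y v := by
    intro v
    set d : F := ω y v * (ω y z₀)⁻¹ with hd
    have hw : ω y (v - d • z₀) = 0 := by
      rw [ω_sub_smul_right, hd]
      field_simp
      ring
    have hw' : ω x (v - d • z₀) = 0 := by
      have : (v - d • z₀) ∈ LinearMap.ker (fω x) := by
        rw [heq]; exact hw
      exact this
    rw [ω_sub_smul_right] at hw'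
    have : ω x v = d * ω x z₀ := by linear_combination hw'
    rw [this, hd, hc]
    field_simp
  have : x - c • y = 0 := by
    apply ω_nondeg
    intro v
    rw [ω_sub_smul x y v c, key v]
    ring
  exact hxy c (by linear_combination (norm := module) this)

lemma card_ker2_filter {x y : Vec} (hx : x ≠ 0) (hy : y ≠ 0) (hxy : ∀ c : F, x ≠ c • y) :
    (univ.filter fun z : Vec => ω x z = 0 ∧ ω y z = 0).card = Fintype.card F ^ 2 := by
  classical
  set kx := LinearMap.ker (fω x) with hkx
  set ky := LinearMap.ker (fω y) with hky
  have hne : kx ≠ ky := ker_ne_ker hx hy hxy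
  have hfx : Module.finrank F kx = 3 := finrank_ker hx
  have hfy : Module.finrank F ky = 3 := finrank_ker hy
  have hlt : kx < kx ⊔ ky := by
    refine lt_of_le_of_ne le_sup_left fun h => hne ?_
    have hle : ky ≤ kx := h ▸ le_sup_right
    exact (Submodule.eq_of_le_of_finrank_le hle (by omega)).symm
  have hsup4 : Module.finrank F ↥(kx ⊔ ky) = 4 := by
    have h1 : Module.finrank F kx < Module.finrank F ↥(kx ⊔ ky) :=
      Submodule.finrank_lt_finrank_of_lt hlt
    have h2 : Module.finrank F ↥(kx ⊔ ky) ≤ Module.finrank F (Fin 4 → GaloisField 2 r) :=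
      Submodule.finrank_le _
    have hV4 : Module.finrank F (Fin 4 → GaloisField 2 r) = 4 := by
      simp [Module.finrank_fin_fun]
    omega
  have hinf : Module.finrank F ↥(kx ⊓ ky) = 2 := by
    have := Submodule.finrank_sup_add_finrank_inf_eq kx ky
    omega
  have hcard : Fintype.card ↥(kx ⊓ ky) = Fintype.card F ^ 2 := by
    have := Module.card_eq_pow_finrank (K := F) (V := ↥(kx ⊓ ky))
    rw [this, hinf]
  rw [← Fintype.card_subtype, ← hcard]
  exact Fintype.card_congr (Equiv.subtypeEquivRight fun z => by
    simp [hkx, hky, Submodule.mem_inf, LinearMap.mem_ker, fω])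

lemma count_scale (Q : Vec → Prop) (hQ0 : ¬ Q 0)
    (hinv : ∀ (c : F) z, c ≠ 0 → (Q (c • z) ↔ Q z)) :
    (Fintype.card F - 1) * (univ.filter fun p : P r => Q (φ p)).card
      = (univ.filter fun z : Vec => Q z).card := by
  classical
  have hbij : Function.Bijective (fun cp : Fˣ × {p : P r // Q (φ p)} =>
      (⟨(cp.1 : F) • φ cp.2.1, (hinv _ _ cp.1.ne_zero).mpr cp.2.2⟩ : {z : Vec // Q z})) := by
    constructor
    · rintro ⟨c, p, hp⟩ ⟨c', p', hp'⟩ hEq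
      simp only [Subtype.mk.injEq] at hEq
      obtain ⟨h1, h2⟩ := unique_decomp c.ne_zero c'.ne_zero hEq
      exact Prod.ext (Units.ext h2) (Subtype.ext h1)
    · rintro ⟨z, hz⟩
      have hz0 : z ≠ 0 := fun h => hQ0 (h ▸ hz)
      obtain ⟨c, p, hc, rfl⟩ := exists_decomp z hz0
      exact ⟨(Units.mk0 c hc, ⟨p, (hinv c (φ p) hc).mp hz⟩), rfl⟩
  have hcards := Fintype.card_of_bijective hbij
  rw [Fintype.card_prod, Fintype.card_units] at hcards
  rw [Fintype.card_subtype, Fintype.card_subtype] at hcards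
  exact hcards

lemma one_le_cardF : 2 ≤ Fintype.card F := Fintype.one_lt_card

lemma cast_cardF_sub_one : ((Fintype.card F - 1 : ℕ) : ℤ) = (Fintype.card F : ℤ) - 1 := by
  have := one_le_cardF (r := r)
  push_cast [Nat.cast_sub (by omega : 1 ≤ Fintype.card F)]
  ring

lemma card_Vec : Fintype.card (Fin 4 → GaloisField 2 r) = Fintype.card F ^ 4 := by
  simp [Fintype.card_fun]

lemma proj_count_diag {x : Vec} (hx : x ≠ 0) :
    ((univ.filter fun p : P r => ¬ ω x (φ p) = 0).card : ℤ) = (Fintype.card F : ℤ) ^ 3 := by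
  classical
  set q := Fintype.card F with hq
  have hcs := count_scale (fun z => ¬ ω x z = 0) (by simp [ω_zero_right])
    (fun c z hc => by
      show ¬ ω x (c • z) = 0 ↔ ¬ ω x z = 0
      rw [ω_smul_right]; simp [hc])
  beta_reduce at hcs
  have hcompl := Finset.card_filter_add_card_filter_not
    (s := (univ : Finset Vec)) (p := fun z : Vec => ω x z = 0)
  rw [card_ker_filter hx, Finset.card_univ, card_Vec] at hcompl
  have hq1 : (1:ℤ) < (q:ℤ) := by exact_mod_cast one_le_cardF (r := r)
  have hA : ((q:ℤ) - 1) * ((univ.filter fun p : P r => ¬ ω x (φ p) = 0).card : ℤ)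
      = ((univ.filter fun z : Vec => ¬ ω x z = 0).card : ℤ) := by
    rw [← cast_cardF_sub_one]
    exact_mod_cast congrArg (Nat.cast : ℕ → ℤ) hcs
  have hB : ((q:ℤ)) ^ 3 + ((univ.filter fun z : Vec => ¬ ω x z = 0).card : ℤ) = (q:ℤ) ^ 4 := by
    exact_mod_cast congrArg (Nat.cast : ℕ → ℤ) hcompl
  have hne : ((q:ℤ) - 1) ≠ 0 := by linarith
  apply mul_left_cancel₀ hne
  linear_combination hA + hB

lemma proj_count_off {x y : Vec} (hx : x ≠ 0) (hy : y ≠ 0) (hxy : ∀ c : F, x ≠ c • y) :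
    ((univ.filter fun p : P r => ¬ ω x (φ p) = 0 ∧ ¬ ω y (φ p) = 0).card : ℤ)
      = (Fintype.card F : ℤ) ^ 3 - (Fintype.card F : ℤ) ^ 2 := by
  classical
  set q := Fintype.card F with hq
  have hcs := count_scale (fun z => ¬ ω x z = 0 ∧ ¬ ω y z = 0)
    (by simp [ω_zero_right])
    (fun c z hc => by
      show (¬ ω x (c • z) = 0 ∧ ¬ ω y (c • z) = 0) ↔ _
      rw [ω_smul_right, ω_smul_right]; simp [hc])
  beta_reduce at hcs
  have hcompl := Finset.card_filter_add_card_filter_not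
    (s := (univ : Finset Vec)) (p := fun z : Vec => ω x z = 0 ∨ ω y z = 0)
  have hfilter_eq : (univ.filter fun z : Vec => ¬ (ω x z = 0 ∨ ω y z = 0))
      = (univ.filter fun z : Vec => ¬ ω x z = 0 ∧ ¬ ω y z = 0) := by
    apply Finset.filter_congr
    intro z _
    tauto
  rw [hfilter_eq] at hcompl
  have hunion : ((univ.filter fun z : Vec => ω x z = 0 ∨ ω y z = 0).card : ℤ)
      + (q:ℤ)^2 = (q:ℤ)^3 + (q:ℤ)^3 := by
    have h1 : (univ.filter fun z : Vec => ω x z = 0 ∨ ω y z = 0)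
        = (univ.filter fun z : Vec => ω x z = 0) ∪ (univ.filter fun z : Vec => ω y z = 0) := by
      rw [← Finset.filter_or]
    have h2 : (univ.filter fun z : Vec => ω x z = 0) ∩ (univ.filter fun z : Vec => ω y z = 0)
        = (univ.filter fun z : Vec => ω x z = 0 ∧ ω y z = 0) := by
      rw [← Finset.filter_and]
    have h3 := Finset.card_union_add_card_inter
      (univ.filter fun z : Vec => ω x z = 0) (univ.filter fun z : Vec => ω y z = 0)
    rw [h2, card_ker2_filter hx hy hxy, card_ker_filter hx, card_ker_filter hy] at h3
    rw [h1]
    exact_mod_cast congrArg (Nat.cast : ℕ → ℤ) h3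
  rw [Finset.card_univ, card_Vec] at hcompl
  have hq1 : (1:ℤ) < (q:ℤ) := by exact_mod_cast one_le_cardF (r := r)
  have hA : ((q:ℤ) - 1) * ((univ.filter fun p : P r => ¬ ω x (φ p) = 0 ∧ ¬ ω y (φ p) = 0).card : ℤ)
      = ((univ.filter fun z : Vec => ¬ ω x z = 0 ∧ ¬ ω y z = 0).card : ℤ) := by
    rw [← cast_cardF_sub_one]
    exact_mod_cast congrArg (Nat.cast : ℕ → ℤ) hcs
  have hB := congrArg (Nat.cast : ℕ → ℤ) hcompl
  push_cast at hB
  have hne : ((q:ℤ) - 1) ≠ 0 := by linarith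
  apply mul_left_cancel₀ hne
  linear_combination hA + hB - hunion

/-- the adjacency matrix -/
noncomputable def Adj : Matrix (P r) (P r) ℤ :=
  Matrix.of fun p p' => if ω (φ p) (φ p') = 0 then 0 else 1

lemma ite_mul_ite (a b : F) :
    ((if a = 0 then (0:ℤ) else 1) * (if b = 0 then (0:ℤ) else 1))
      = if ¬ a = 0 ∧ ¬ b = 0 then 1 else 0 := by
  split_ifs <;> simp_all

lemma Adj_mul_apply (p p' : P r) :
    (Adj (r := r) * Adj (r := r)) p p'
      = ((univ.filter fun z : P r => ¬ ω (φ p) (φ z) = 0 ∧ ¬ ω (φ p') (φ z) = 0).card : ℤ) := by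
  classical
  rw [Matrix.mul_apply]
  have : ∀ z : P r, Adj p z * Adj z p'
      = if ¬ ω (φ p) (φ z) = 0 ∧ ¬ ω (φ p') (φ z) = 0 then (1:ℤ) else 0 := by
    intro z
    show (if ω (φ p) (φ z) = 0 then (0:ℤ) else 1) * (if ω (φ z) (φ p') = 0 then (0:ℤ) else 1)
      = _
    rw [ω_symm (φ z) (φ p')]
    exact ite_mul_ite _ _
  simp only [this]
  rw [Finset.sum_boole]

theorem isSRG_Adj :
    IsSRGAdj (Adj (r := r)) ((Fintype.card F : ℤ) ^ 3)
      ((Fintype.card F : ℤ) ^ 3 - (Fintype.card F : ℤ) ^ 2)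
      ((Fintype.card F : ℤ) ^ 3 - (Fintype.card F : ℤ) ^ 2) := by
  classical
  have hdiag : ∀ p : P r, Adj p p = 0 := by
    intro p
    show (if ω (φ p) (φ p) = 0 then (0:ℤ) else 1) = 0
    rw [if_pos (ω_self (φ p))]
  refine ⟨?_, hdiag, ?_, ?_⟩
  · ext p p'
    show Adj p' p = Adj p p'
    unfold Adj
    simp only [Matrix.of_apply]
    rw [ω_symm]
  · intro p p'
    unfold Adj
    simp only [Matrix.of_apply]
    split_ifs <;> simp
  · ext p p'
    rw [Adj_mul_apply]
    by_cases hpp : p = p'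
    · subst hpp
      have hcnt : ((univ.filter fun z : P r => ¬ ω (φ p) (φ z) = 0 ∧ ¬ ω (φ p) (φ z) = 0).card : ℤ)
          = (Fintype.card F : ℤ) ^ 3 := by
        have hfe : (univ.filter fun z : P r => ¬ ω (φ p) (φ z) = 0 ∧ ¬ ω (φ p) (φ z) = 0)
            = (univ.filter fun z : P r => ¬ ω (φ p) (φ z) = 0) :=
          Finset.filter_congr fun z _ => by tauto
        rw [hfe]
        exact proj_count_diag (φ_ne_zero p)
      rw [hcnt]
      simp only [Matrix.add_apply, Matrix.smul_apply, Matrix.one_apply_eq, Matrix.sub_apply,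
        allOnes, Matrix.of_apply, hdiag p, smul_eq_mul]
      ring
    · have hcnt := proj_count_off (φ_ne_zero p) (φ_ne_zero p') (nonprop_of_ne hpp)
      rw [hcnt]
      simp only [Matrix.add_apply, Matrix.smul_apply, Matrix.one_apply_ne hpp, Matrix.sub_apply,
        allOnes, Matrix.of_apply, smul_eq_mul]
      ring

lemma card_P : Fintype.card (P r) = 1 + Fintype.card F + Fintype.card F ^ 2 + Fintype.card F ^ 3 := by
  classical
  simp only [P, Fintype.card_sum, Fintype.card_prod, Fintype.card_unit]
  ring

end Field

theorem main (r q : ℕ) (hr : 1 ≤ r) (hq : q = 2 ^ r) :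
    ∃ A : Matrix (Fin (1 + q + q ^ 2 + q ^ 3)) (Fin (1 + q + q ^ 2 + q ^ 3)) ℤ,
      IsSRGAdj A ((q : ℤ) ^ 3) ((q : ℤ) ^ 3 - (q : ℤ) ^ 2) ((q : ℤ) ^ 3 - (q : ℤ) ^ 2) := by
  classical
  haveI : Fact (Nat.Prime 2) := ⟨Nat.prime_two⟩
  have hr0 : r ≠ 0 := by omega
  have hcardF : Fintype.card (GaloisField 2 r) = q := by
    rw [← Nat.card_eq_fintype_card, GaloisField.card 2 r hr0, hq]
  have hcardP : Fintype.card (P r) = 1 + q + q ^ 2 + q ^ 3 := by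
    rw [card_P, hcardF]
  let e : P r ≃ Fin (1 + q + q ^ 2 + q ^ 3) := Fintype.equivFinOfCardEq hcardP
  refine ⟨Matrix.reindex e e (Adj (r := r)), ?_⟩
  have h := isSRG_Adj (r := r)
  rw [hcardF] at h
  exact isSRGAdj_reindex e h

end SRG4


theorem stmt4 (r q : ℕ) (hr : 1 ≤ r) (hq : q = 2 ^ r) :
    ∃ A : Matrix (Fin (1 + q + q ^ 2 + q ^ 3)) (Fin (1 + q + q ^ 2 + q ^ 3)) ℤ,
      IsSRGAdj A ((q : ℤ) ^ 3) ((q : ℤ) ^ 3 - (q : ℤ) ^ 2) ((q : ℤ) ^ 3 - (q : ℤ) ^ 2) := by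
  exact SRG4.main r q hr hq
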